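/- Let H be a complex Hilbert space and D : dom(D) ⊆ H → H a self-adjoint operator. Suppose dom(D) decomposes as an internal direct sum of two D-invariant subspaces V₀ ⊕ V₁ whose closures give an orthogonal decomposition H = H₀ ⊕ H₁, and suppose D restricted to V₁ (as an operator on H₁) is bijective onto H₁ with bounded inverse. Then 0 is in the spectrum of D if and only if 0 is in the spectrum of the restriction of D to V₀ (as an operator on H₀), and ker(D) = ker(D|_{V₀}). -/

import Mathlib

/-- `0` is a regular point for the (unbounded) operator `D` restricted to the subspace `V`
of its domain, viewed as an operator on the Hilbert space `closure V`: the restriction is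
surjective onto `closure V` and has a bounded inverse. For `V = ⊤` this says `0 ∉ spec D`. -/
def ZeroRegularOn {H : Type*} [NormedAddCommGroup H] [InnerProductSpace ℂ H]
    [CompleteSpace H] (D : H →ₗ.[ℂ] H) (V : Submodule ℂ H) : Prop :=
  (∀ y ∈ V.topologicalClosure, ∃ s : D.domain, (s : H) ∈ V ∧ D s = y) ∧
  ∃ C : ℝ, 0 < C ∧ ∀ s : D.domain, (s : H) ∈ V → ‖(s : H)‖ ≤ C * ‖D s‖

/-- Splitting principle: if a self-adjoint operator `D` decomposes along an orthogonal
decomposition `dom D = V₀ ⊕ V₁` into `D`-invariant pieces, and `D` restricted to `V₁` is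
bijective onto `H₁ = closure V₁` with bounded inverse, then `0 ∈ spec D` iff
`0 ∈ spec (D|_{V₀})`, and `ker D = ker (D|_{V₀})`. -/
theorem zero_spectrum_splitting {H : Type*} [NormedAddCommGroup H] [InnerProductSpace ℂ H]
    [CompleteSpace H] (D : H →ₗ.[ℂ] H) (hsa : D.adjoint = D)
    (V₀ V₁ : Submodule ℂ H) (hV₀ : V₀ ≤ D.domain) (hV₁ : V₁ ≤ D.domain)
    (hsum : V₀ ⊔ V₁ = D.domain) (hdisj : V₀ ⊓ V₁ = ⊥)
    (horth : ∀ x ∈ V₀, ∀ y ∈ V₁, (inner ℂ x y : ℂ) = 0)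
    (hdense : V₀.topologicalClosure ⊔ V₁.topologicalClosure = ⊤)
    (hinv0 : ∀ s : D.domain, (s : H) ∈ V₀ → D s ∈ V₀.topologicalClosure)
    (hinv1 : ∀ s : D.domain, (s : H) ∈ V₁ → D s ∈ V₁.topologicalClosure)
    (hreg1 : ZeroRegularOn D V₁) :
    (¬ ZeroRegularOn D ⊤ ↔ ¬ ZeroRegularOn D V₀) ∧
    ∀ s : D.domain, D s = 0 → (s : H) ∈ V₀ := by
  obtain ⟨hsurj1, C₁, hC₁pos, hC₁⟩ := hreg1
  -- orthogonality of the closures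
  have h1perp : V₁.topologicalClosure ≤ V₀ᗮ := by
    apply Submodule.topologicalClosure_minimal
    · intro y hy
      exact (Submodule.mem_orthogonal V₀ y).2 fun u hu => horth u hu y hy
    · exact Submodule.isClosed_orthogonal V₀
  have h0perp : V₀.topologicalClosure ≤ V₀ᗮᗮ :=
    Submodule.topologicalClosure_minimal V₀ V₀.le_orthogonal_orthogonal
      (Submodule.isClosed_orthogonal _)
  have hperp : ∀ x ∈ V₀.topologicalClosure, ∀ y ∈ V₁.topologicalClosure,
      (inner ℂ x y : ℂ) = 0 := by
    intro x hx y hy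
    have h := (Submodule.mem_orthogonal _ x).1 (h0perp hx) y (h1perp hy)
    rw [← inner_conj_symm, h, map_zero]
  -- decomposition of elements of the domain
  have hdecomp : ∀ s : D.domain, ∃ (a : H) (ha : a ∈ V₀) (b : H) (hb : b ∈ V₁),
      (s : H) = a + b := by
    intro s
    have hs : (s : H) ∈ V₀ ⊔ V₁ := by rw [hsum]; exact s.2
    obtain ⟨a, ha, b, hb, h⟩ := Submodule.mem_sup.1 hs
    exact ⟨a, ha, b, hb, h.symm⟩
  -- orthogonal vectors: norm inequality
  have hnorm : ∀ a b : H, (inner ℂ a b : ℂ) = 0 → ‖a‖ ≤ ‖a + b‖ ∧ ‖b‖ ≤ ‖a + b‖ := by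
    intro a b hab
    have h := norm_add_sq_eq_norm_sq_add_norm_sq_of_inner_eq_zero a b hab
    constructor <;> nlinarith [norm_nonneg a, norm_nonneg b, norm_nonneg (a + b)]
  -- an element of V₁ with D s = 0 is 0
  have hkerV₁ : ∀ s : D.domain, (s : H) ∈ V₁ → D s = 0 → (s : H) = 0 := by
    intro s hs hDs
    have h := hC₁ s hs
    rw [hDs, norm_zero, mul_zero] at h
    exact norm_le_zero_iff.1 h
  -- the kernel statement
  have hker : ∀ s : D.domain, D s = 0 → (s : H) ∈ V₀ := by
    intro s hDs
    obtain ⟨a, ha, b, hb, hab⟩ := hdecomp s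
    set sa : D.domain := ⟨a, hV₀ ha⟩ with hsa_def
    set sb : D.domain := ⟨b, hV₁ hb⟩ with hsb_def
    have hs_eq : s = sa + sb := Subtype.ext (by simp [hsa_def, hsb_def, hab])
    have hD : D sa + D sb = 0 := by rw [← D.map_add, ← hs_eq, hDs]
    have hmem0 : D sa ∈ V₀.topologicalClosure := hinv0 _ ha
    have hmem1 : D sb ∈ V₁.topologicalClosure := hinv1 _ hb
    have hDb : D sb = 0 := by
      have hneg : D sb = -D sa := eq_neg_of_add_eq_zero_right hD
      have : (inner ℂ (D sb) (D sb) : ℂ) = 0 := by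
        nth_rewrite 1 [hneg]
        rw [inner_neg_left, hperp _ hmem0 _ hmem1, neg_zero]
      exact inner_self_eq_zero.1 this
    have hb0 : b = 0 := hkerV₁ sb hb hDb
    rw [hab, hb0, add_zero]
    exact ha
  refine ⟨not_congr ?_, hker⟩
  constructor
  · rintro ⟨hsurj, C, hCpos, hC⟩
    constructor
    · intro y hy
      obtain ⟨s, -, hDs⟩ := hsurj y (Submodule.le_topologicalClosure ⊤ Submodule.mem_top)
      obtain ⟨a, ha, b, hb, hab⟩ := hdecomp s
      set sa : D.domain := ⟨a, hV₀ ha⟩ with hsa_def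
      set sb : D.domain := ⟨b, hV₁ hb⟩ with hsb_def
      have hs_eq : s = sa + sb := Subtype.ext (by simp [hsa_def, hsb_def, hab])
      have hD : D sa + D sb = y := by rw [← D.map_add, ← hs_eq, hDs]
      have hmem1 : D sb ∈ V₁.topologicalClosure := hinv1 _ hb
      have hmem0 : D sb ∈ V₀.topologicalClosure := by
        have : D sb = y - D sa := eq_sub_of_add_eq' hD
        rw [this]
        exact Submodule.sub_mem _ hy (hinv0 _ ha)
      have hDb : D sb = 0 := inner_self_eq_zero.1 (hperp _ hmem0 _ hmem1)
      refine ⟨sa, ha, ?_⟩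
      rw [← hD, hDb, add_zero]
    · exact ⟨C, hCpos, fun s _ => hC s trivial⟩
  · rintro ⟨hsurj0, C₀, hC₀pos, hC₀⟩
    constructor
    · intro y _
      have hy : y ∈ V₀.topologicalClosure ⊔ V₁.topologicalClosure :=
        hdense ▸ Submodule.mem_top
      obtain ⟨y₀, hy₀, y₁, hy₁, hyeq⟩ := Submodule.mem_sup.1 hy
      obtain ⟨s₀, hs₀V, hDs₀⟩ := hsurj0 y₀ hy₀
      obtain ⟨s₁, hs₁V, hDs₁⟩ := hsurj1 y₁ hy₁
      exact ⟨s₀ + s₁, trivial, by rw [D.map_add, hDs₀, hDs₁, hyeq]⟩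
    · refine ⟨C₀ + C₁, by positivity, fun s _ => ?_⟩
      obtain ⟨a, ha, b, hb, hab⟩ := hdecomp s
      set sa : D.domain := ⟨a, hV₀ ha⟩ with hsa_def
      set sb : D.domain := ⟨b, hV₁ hb⟩ with hsb_def
      have hs_eq : s = sa + sb := Subtype.ext (by simp [hsa_def, hsb_def, hab])
      have hDs_eq : D s = D sa + D sb := by rw [hs_eq, D.map_add]
      have hin : (inner ℂ (D sa) (D sb) : ℂ) = 0 :=
        hperp _ (hinv0 _ ha) _ (hinv1 _ hb)
      obtain ⟨hle0, hle1⟩ := hnorm _ _ hin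
      calc ‖(s : H)‖ = ‖a + b‖ := by rw [hab]
        _ ≤ ‖a‖ + ‖b‖ := norm_add_le a b
        _ ≤ C₀ * ‖D sa‖ + C₁ * ‖D sb‖ := add_le_add (hC₀ sa ha) (hC₁ sb hb)
        _ ≤ C₀ * ‖D s‖ + C₁ * ‖D s‖ := by
            rw [hDs_eq]
            exact add_le_add (mul_le_mul_of_nonneg_left hle0 hC₀pos.le)
              (mul_le_mul_of_nonneg_left hle1 hC₁pos.le)
        _ = (C₀ + C₁) * ‖D s‖ := by ring
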